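/- Let Z₁ and Z₂ be independent standard normal random variables, let μ > 0, σ > 0, and let τ < v < t be integers. Then P( σZ₁/√(t−v) + μ > (σZ₂/√(v−τ) + μ)·(1 + √(1 + (v−τ)/(t−v))) ) = 1 − Φ( (μ/σ)·√( (t−τ)(v−τ) / ( (v−τ) + (√(t−v) + √(t−τ))² ) ) ) ≤ 1 − Φ( (μ/σ)·√((v−τ)/5) ), where Φ is the standard normal cumulative distribution function. -/

import Mathlib

open MeasureTheory ProbabilityTheory Filter Real
open scoped ENNReal NNReal

noncomputable section

/-- Standard normal CDF Φ. -/
def stdCDF (x : ℝ) : ℝ := ((gaussianReal 0 1) (Set.Iic x)).toReal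

lemma gauss_conv (v₁ v₂ : NNReal) (h₁ : v₁ ≠ 0) (h₂ : v₂ ≠ 0) (z : ℝ) :
    ∫ x, gaussianPDFReal 0 v₁ x * gaussianPDFReal 0 v₂ (z - x)
      = gaussianPDFReal 0 (v₁ + v₂) z := by
  have hV₁ : (0:ℝ) < v₁ := by positivity
  have hV₂ : (0:ℝ) < v₂ := by positivity
  have hS : (0:ℝ) < (v₁:ℝ) + v₂ := by linarith
  set s : ℝ := (v₁:ℝ) * v₂ / ((v₁:ℝ) + v₂) with hs_def
  have hs : 0 < s := by positivity
  set m : ℝ := (v₁:ℝ) * z / ((v₁:ℝ) + v₂) with hm_def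
  set C : ℝ := (√(2 * π * v₁))⁻¹ * (√(2 * π * v₂))⁻¹ * rexp (-z^2 / (2 * ((v₁:ℝ) + v₂)))
    with hC_def
  have key : ∀ x : ℝ, gaussianPDFReal 0 v₁ x * gaussianPDFReal 0 v₂ (z - x)
      = C * rexp (-(x - m)^2 / (2 * s)) := by
    intro x
    simp only [gaussianPDFReal, sub_zero, hC_def]
    have hexp : -x ^ 2 / (2 * (v₁:ℝ)) + -(z - x) ^ 2 / (2 * (v₂:ℝ))
        = -z^2/(2*((v₁:ℝ)+v₂)) + -(x-m)^2/(2*s) := by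
      rw [hm_def, hs_def]; field_simp; ring
    rw [mul_mul_mul_comm, ← Real.exp_add, hexp, Real.exp_add]
    ring
  rw [integral_congr_ae (Filter.Eventually.of_forall key), MeasureTheory.integral_const_mul]
  have hint : ∫ x : ℝ, rexp (-(x - m)^2 / (2 * s)) = √(2 * π * s) := by
    rw [integral_sub_right_eq_self (fun x => rexp (-x^2 / (2 * s))) m]
    have : ∀ x : ℝ, -x^2/(2*s) = -((2*s)⁻¹) * x^2 := by intro x; field_simp
    simp_rw [this]
    rw [integral_gaussian]
    congr 1
    have : s ≠ 0 := ne_of_gt hs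
    field_simp
  rw [hint, hC_def]
  simp only [gaussianPDFReal, sub_zero, NNReal.coe_add]
  have hsqrt : √(2 * π * s) = √(2 * π * v₁) * √(2 * π * v₂) / √(2 * π * ((v₁:ℝ) + v₂)) := by
    rw [eq_div_iff (by positivity), ← Real.sqrt_mul (by positivity), ← Real.sqrt_mul (by positivity)]
    congr 1
    rw [hs_def]
    field_simp
  rw [hsqrt]
  have h1 : √(2 * π * (v₁:ℝ)) ≠ 0 := by positivity
  have h2 : √(2 * π * (v₂:ℝ)) ≠ 0 := by positivity
  field_simp

lemma gaussianPDFReal_le (v : ℝ≥0) (y : ℝ) :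
    gaussianPDFReal 0 v y ≤ (√(2 * π * v))⁻¹ := by
  rw [gaussianPDFReal, sub_zero]
  have h1 : rexp (-y ^ 2 / (2 * v)) ≤ 1 := by
    rw [Real.exp_le_one_iff]
    by_cases hv : (v:ℝ) = 0
    · simp [hv]
    · have : (0:ℝ) < v := lt_of_le_of_ne v.2 (Ne.symm hv)
      have := sq_nonneg y
      rw [div_nonpos_iff]
      right; constructor <;> nlinarith
  calc (√(2 * π * v))⁻¹ * rexp (-y ^ 2 / (2 * v)) ≤ (√(2 * π * v))⁻¹ * 1 := by
        exact mul_le_mul_of_nonneg_left h1 (by positivity)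
    _ = _ := mul_one _

lemma integrable_conv (v₁ v₂ : NNReal) (z : ℝ) :
    Integrable (fun x => gaussianPDFReal 0 v₁ x * gaussianPDFReal 0 v₂ (z - x)) := by
  apply Integrable.mono' ((integrable_gaussianPDFReal 0 v₁).const_mul (√(2 * π * v₂))⁻¹)
  · exact ((measurable_gaussianPDFReal 0 v₁).mul
      ((measurable_gaussianPDFReal 0 v₂).comp (measurable_const.sub measurable_id))).aestronglyMeasurable
  · filter_upwards with x
    rw [Real.norm_eq_abs, abs_of_nonneg (mul_nonneg (gaussianPDFReal_nonneg _ _ _)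
      (gaussianPDFReal_nonneg _ _ _)), mul_comm ((√(2 * π * (v₂:ℝ)))⁻¹)]
    exact mul_le_mul_of_nonneg_left (gaussianPDFReal_le v₂ _) (gaussianPDFReal_nonneg _ _ _)

lemma gauss_conv_lintegral (v₁ v₂ : NNReal) (h₁ : v₁ ≠ 0) (h₂ : v₂ ≠ 0) (z : ℝ) :
    ∫⁻ x, gaussianPDF 0 v₁ x * gaussianPDF 0 v₂ (z - x) = gaussianPDF 0 (v₁ + v₂) z := by
  simp only [gaussianPDF]
  have : ∀ x : ℝ, ENNReal.ofReal (gaussianPDFReal 0 v₁ x) *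
      ENNReal.ofReal (gaussianPDFReal 0 v₂ (z - x))
      = ENNReal.ofReal (gaussianPDFReal 0 v₁ x * gaussianPDFReal 0 v₂ (z - x)) := fun x =>
    (ENNReal.ofReal_mul (gaussianPDFReal_nonneg _ _ _)).symm
  simp_rw [this]
  rw [← ofReal_integral_eq_lintegral_ofReal (integrable_conv v₁ v₂ z)
    (Filter.Eventually.of_forall fun x => mul_nonneg (gaussianPDFReal_nonneg _ _ _)
      (gaussianPDFReal_nonneg _ _ _)), gauss_conv v₁ v₂ h₁ h₂ z]

lemma gauss_map_add (v₁ v₂ : NNReal) (h₁ : v₁ ≠ 0) (h₂ : v₂ ≠ 0) :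
    Measure.map (fun p : ℝ × ℝ => p.1 + p.2)
      ((gaussianReal 0 v₁).prod (gaussianReal 0 v₂)) = gaussianReal 0 (v₁ + v₂) := by
  have h12 : v₁ + v₂ ≠ 0 := by simp [h₁]
  ext s hs
  rw [Measure.map_apply (by fun_prop) hs]
  set f : ℝ → ℝ≥0∞ := s.indicator (fun _ => (1:ℝ≥0∞)) with hf_def
  have hmeas_ind : Measurable f := measurable_const.indicator hs
  have step1 : ((gaussianReal 0 v₁).prod (gaussianReal 0 v₂))
      ((fun p : ℝ × ℝ => p.1 + p.2) ⁻¹' s)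
      = ∫⁻ x, ∫⁻ y, f (x + y) ∂(gaussianReal 0 v₂) ∂(gaussianReal 0 v₁) := by
    rw [← lintegral_indicator_one (hs.preimage (by fun_prop : Measurable (fun p : ℝ × ℝ => p.1 + p.2)))]
    have he : ∀ p : ℝ × ℝ, ((fun p : ℝ × ℝ => p.1 + p.2) ⁻¹' s).indicator (1 : ℝ × ℝ → ℝ≥0∞) p
        = f (p.1 + p.2) := by
      intro p
      by_cases hp : p.1 + p.2 ∈ s <;> simp [hf_def, Set.indicator, hp, Set.mem_preimage]
    simp_rw [he]
    exact lintegral_prod _ ((hmeas_ind.comp (measurable_fst.add measurable_snd)).aemeasurable)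
  rw [step1]
  have hwd₁ : gaussianReal 0 v₁ = volume.withDensity (gaussianPDF 0 v₁) :=
    gaussianReal_of_var_ne_zero 0 h₁
  have hwd₂ : gaussianReal 0 v₂ = volume.withDensity (gaussianPDF 0 v₂) :=
    gaussianReal_of_var_ne_zero 0 h₂
  have step2 : ∀ x : ℝ, ∫⁻ y, f (x + y) ∂(gaussianReal 0 v₂)
      = ∫⁻ z, f z * gaussianPDF 0 v₂ (z - x) := by
    intro x
    have hg : Measurable fun y : ℝ => f (x + y) :=
      hmeas_ind.comp (measurable_const.add measurable_id)
    rw [hwd₂, lintegral_withDensity_eq_lintegral_mul _ (measurable_gaussianPDF 0 v₂) hg]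
    calc ∫⁻ y, gaussianPDF 0 v₂ y * f (x + y)
        = ∫⁻ z, gaussianPDF 0 v₂ (z - x) * f z := by
          rw [← lintegral_add_right_eq_self (fun z => gaussianPDF 0 v₂ (z - x) * f z) x]
          simp [add_comm]
      _ = _ := by simp_rw [mul_comm]
  simp_rw [step2]
  have hmeasF : Measurable fun x : ℝ => ∫⁻ z, f z * gaussianPDF 0 v₂ (z - x) := by
    apply Measurable.lintegral_prod_right' (f := fun p : ℝ × ℝ => f p.2 * gaussianPDF 0 v₂ (p.2 - p.1))
    exact (hmeas_ind.comp measurable_snd).mul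
      ((measurable_gaussianPDF 0 v₂).comp (measurable_snd.sub measurable_fst))
  rw [hwd₁, lintegral_withDensity_eq_lintegral_mul _ (measurable_gaussianPDF 0 v₁) hmeasF]
  have step3 : ∀ x : ℝ, gaussianPDF 0 v₁ x * ∫⁻ z, f z * gaussianPDF 0 v₂ (z - x)
      = ∫⁻ z, f z * (gaussianPDF 0 v₁ x * gaussianPDF 0 v₂ (z - x)) := by
    intro x
    rw [← lintegral_const_mul' (gaussianPDF 0 v₁ x) _ ENNReal.ofReal_ne_top]
    congr 1
    ext z
    ring
  simp only [Pi.mul_apply]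
  simp_rw [step3]
  rw [lintegral_lintegral_swap]
  · have step4 : ∀ z : ℝ, ∫⁻ x, f z * (gaussianPDF 0 v₁ x * gaussianPDF 0 v₂ (z - x))
        = f z * gaussianPDF 0 (v₁ + v₂) z := by
      intro z
      rw [lintegral_const_mul' _ _ (by by_cases hz : z ∈ s <;> simp [hf_def, hz] :
          f z ≠ ⊤), gauss_conv_lintegral v₁ v₂ h₁ h₂ z]
    simp_rw [step4]
    rw [gaussianReal_of_var_ne_zero 0 h12, withDensity_apply _ hs,
      ← lintegral_indicator hs]
    congr 1
    ext z
    by_cases hz : z ∈ s <;> simp [hf_def, Set.indicator, hz]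
  · apply Measurable.aemeasurable
    exact ((hmeas_ind.comp measurable_snd).mul (((measurable_gaussianPDF 0 v₁).comp measurable_fst).mul
      ((measurable_gaussianPDF 0 v₂).comp (measurable_snd.sub measurable_fst))))

lemma gauss_map_lin {Ω : Type*} [MeasurableSpace Ω] (P : Measure Ω) [IsProbabilityMeasure P]
    (Z₁ Z₂ : Ω → ℝ) (h1meas : Measurable Z₁) (h2meas : Measurable Z₂)
    (hind : IndepFun Z₁ Z₂ P)
    (h1 : Measure.map Z₁ P = gaussianReal 0 1)
    (h2 : Measure.map Z₂ P = gaussianReal 0 1)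
    (a b : ℝ) (ha : a ≠ 0) (hb : b ≠ 0) :
    Measure.map (fun ω => a * Z₁ ω + b * Z₂ ω) P
      = gaussianReal 0 (⟨a^2, sq_nonneg a⟩ + ⟨b^2, sq_nonneg b⟩) := by
  have hprod : Measure.map (fun ω => (Z₁ ω, Z₂ ω)) P
      = (gaussianReal 0 1).prod (gaussianReal 0 1) := by
    rw [(indepFun_iff_map_prod_eq_prod_map_map h1meas.aemeasurable h2meas.aemeasurable).mp hind,
      h1, h2]
  have hcomp : (fun ω => a * Z₁ ω + b * Z₂ ω)
      = (fun p : ℝ × ℝ => p.1 + p.2) ∘ (Prod.map (fun x => a * x) (fun x => b * x))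
        ∘ (fun ω => (Z₁ ω, Z₂ ω)) := rfl
  rw [hcomp, ← Function.comp_assoc]
  rw [← Measure.map_map (by fun_prop) (h1meas.prodMk h2meas)]
  rw [hprod]
  rw [← Measure.map_map (by fun_prop)
    ((measurable_const_mul a).prodMap (measurable_const_mul b))]
  rw [← Measure.map_prod_map _ _ (measurable_const_mul a) (measurable_const_mul b)]
  have hma : Measure.map (fun x => a * x) (gaussianReal 0 1) = gaussianReal 0 ⟨a^2, sq_nonneg a⟩ := by
    rw [show (fun x => a * x) = (a * ·) from rfl, gaussianReal_map_const_mul]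
    simp
    rfl
  have hmb : Measure.map (fun x => b * x) (gaussianReal 0 1) = gaussianReal 0 ⟨b^2, sq_nonneg b⟩ := by
    rw [show (fun x => b * x) = (b * ·) from rfl, gaussianReal_map_const_mul]
    simp
    rfl
  rw [hma, hmb]
  exact gauss_map_add _ _ (by intro h; exact pow_ne_zero 2 ha (congrArg Subtype.val h))
    (by intro h; exact pow_ne_zero 2 hb (congrArg Subtype.val h))

lemma gauss_tail (V : NNReal) (hV : V ≠ 0) (c : ℝ) :
    ((gaussianReal 0 V) (Set.Ioi c)).toReal = 1 - stdCDF (c / Real.sqrt V) := by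
  have hVpos : (0:ℝ) < V := lt_of_le_of_ne V.2 (by exact_mod_cast (Ne.symm hV))
  have hr : (0:ℝ) < Real.sqrt V := Real.sqrt_pos.mpr hVpos
  have hmap : Measure.map (fun x => Real.sqrt V * x) (gaussianReal 0 1) = gaussianReal 0 V := by
    rw [show (fun x => Real.sqrt (V:ℝ) * x) = ((Real.sqrt V : ℝ) * ·) from rfl,
      gaussianReal_map_const_mul]
    congr 1
    · simp
    · ext
      simp [Real.sq_sqrt hVpos.le]
  have happ : (gaussianReal 0 V) (Set.Ioi c) = (gaussianReal 0 1) (Set.Ioi (c / Real.sqrt V)) := by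
    rw [← hmap, Measure.map_apply (measurable_const_mul _) measurableSet_Ioi]
    congr 1
    ext x
    simp only [Set.mem_preimage, Set.mem_Ioi]
    rw [div_lt_iff₀ hr, mul_comm]
  rw [happ, ← Set.compl_Iic, prob_compl_eq_one_sub measurableSet_Iic,
    ENNReal.toReal_sub_of_le prob_le_one ENNReal.one_ne_top, ENNReal.toReal_one, stdCDF]

lemma stdCDF_mono : Monotone stdCDF := by
  intro x y hxy
  apply ENNReal.toReal_mono (measure_ne_top _ _)
  exact measure_mono (Set.Iic_subset_Iic.mpr hxy)

lemma arith_eq (μ σ A B : ℝ) (hμ : 0 < μ) (hσ : 0 < σ) (hA : 0 < A) (hB : 0 < B) :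
    μ * √(1 + B/A) / √((σ/√A)^2 + (-(σ*(1+√(1 + B/A))/√B))^2)
      = (μ/σ) * √((A+B)*B/(B + (√A + √(A+B))^2)) := by
  set k : ℝ := √(1 + B/A) with hk_def
  have hk0 : 0 ≤ k := Real.sqrt_nonneg _
  have hsA : (√A)^2 = A := Real.sq_sqrt hA.le
  have hsAB : (√(A+B))^2 = A + B := Real.sq_sqrt (by linarith)
  have hk2 : k^2 = (A+B)/A := by
    rw [hk_def, Real.sq_sqrt (by positivity)]
    field_simp
  have hk2' : A * k^2 = A + B := by rw [hk2]; field_simp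
  have hAk : A * k = √A * √(A+B) := by
    have h1 : A * k = √(A^2) * √((A+B)/A) := by
      rw [Real.sqrt_sq hA.le, hk_def]
      congr 2
      field_simp
    rw [h1, ← Real.sqrt_mul (sq_nonneg A)]
    have h2 : A^2 * ((A+B)/A) = A * (A+B) := by field_simp
    rw [h2, Real.sqrt_mul hA.le]
  have hD : B + (√A + √(A+B))^2 = B + A*(1+k)^2 := by
    have hexp : (√A + √(A+B))^2 = (√A)^2 + 2*(√A*√(A+B)) + (√(A+B))^2 := by ring
    rw [hexp, hsA, hsAB, ← hAk]
    ring_nf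
    linarith [hk2']
  have hsB : (√B)^2 = B := Real.sq_sqrt hB.le
  have hsq : (σ/√A)^2 + (-(σ*(1+k)/√B))^2 = σ^2*(B + A*(1+k)^2)/(A*B) := by
    rw [neg_sq, div_pow, div_pow, hsA, hsB, mul_pow]
    field_simp
  have hDpos : 0 < B + A*(1+k)^2 := by nlinarith
  have hWpos : 0 < σ^2*(B + A*(1+k)^2)/(A*B) := by positivity
  rw [hsq, hD]
  have hlhs : μ * k / √(σ^2*(B + A*(1+k)^2)/(A*B))
      = √((μ*k)^2 / (σ^2*(B + A*(1+k)^2)/(A*B))) := by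
    rw [Real.sqrt_div (sq_nonneg _), Real.sqrt_sq (by positivity)]
  have hrhs : (μ/σ) * √((A+B)*B/(B + A*(1+k)^2))
      = √((μ/σ)^2 * ((A+B)*B/(B + A*(1+k)^2))) := by
    rw [Real.sqrt_mul (sq_nonneg _), Real.sqrt_sq (by positivity)]
  rw [hlhs, hrhs]
  congr 1
  rw [div_div_eq_mul_div, mul_pow, hk2]
  field_simp

lemma arith_ineq (A B : ℝ) (hA : 0 < A) (hB : 0 < B) :
    √(B/5) ≤ √((A+B)*B/(B + (√A + √(A+B))^2)) := by
  apply Real.sqrt_le_sqrt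
  have hsA : (√A)^2 = A := Real.sq_sqrt hA.le
  have hsAB : (√(A+B))^2 = A + B := Real.sq_sqrt (by linarith)
  have h2 : 2*(√A*√(A+B)) ≤ A + (A+B) := by
    nlinarith [two_mul_le_add_sq (√A) (√(A+B))]
  have hDpos : 0 < B + (√A + √(A+B))^2 := by positivity
  rw [div_le_div_iff₀ (by norm_num) hDpos]
  nlinarith [Real.sqrt_nonneg A, Real.sqrt_nonneg (A+B)]


/-- For independent standard normal Z₁, Z₂, μ > 0, σ > 0 and
integers τ < v < t:
P(σZ₁/√(t−v) + μ > (σZ₂/√(v−τ) + μ)(1 + √(1+(v−τ)/(t−v))))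
  = 1 − Φ((μ/σ)√((t−τ)(v−τ)/((v−τ)+(√(t−v)+√(t−τ))²)))
  ≤ 1 − Φ((μ/σ)√((v−τ)/5)). -/
theorem statement17 (μ σ : ℝ) (hμ : 0 < μ) (hσ : 0 < σ) (τ v t : ℤ)
    (hτv : τ < v) (hvt : v < t)
    (Ω : Type*) [MeasurableSpace Ω] (P : Measure Ω) [IsProbabilityMeasure P]
    (Z₁ Z₂ : Ω → ℝ) (h1meas : Measurable Z₁) (h2meas : Measurable Z₂)
    (hind : IndepFun Z₁ Z₂ P)
    (h1 : Measure.map Z₁ P = gaussianReal 0 1)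
    (h2 : Measure.map Z₂ P = gaussianReal 0 1) :
    (P {ω | (σ * Z₂ ω / Real.sqrt ((v : ℝ) - (τ : ℝ)) + μ) *
          (1 + Real.sqrt (1 + ((v : ℝ) - (τ : ℝ)) / ((t : ℝ) - (v : ℝ))))
        < σ * Z₁ ω / Real.sqrt ((t : ℝ) - (v : ℝ)) + μ}).toReal
      = 1 - stdCDF ((μ / σ) * Real.sqrt (((t : ℝ) - (τ : ℝ)) * ((v : ℝ) - (τ : ℝ)) /
          (((v : ℝ) - (τ : ℝ)) +
            (Real.sqrt ((t : ℝ) - (v : ℝ)) + Real.sqrt ((t : ℝ) - (τ : ℝ))) ^ 2)))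
    ∧ 1 - stdCDF ((μ / σ) * Real.sqrt (((t : ℝ) - (τ : ℝ)) * ((v : ℝ) - (τ : ℝ)) /
          (((v : ℝ) - (τ : ℝ)) +
            (Real.sqrt ((t : ℝ) - (v : ℝ)) + Real.sqrt ((t : ℝ) - (τ : ℝ))) ^ 2)))
      ≤ 1 - stdCDF ((μ / σ) * Real.sqrt (((v : ℝ) - (τ : ℝ)) / 5)) := by
  have hA : (0:ℝ) < (t:ℝ) - (v:ℝ) := sub_pos.mpr (by exact_mod_cast hvt)
  have hB : (0:ℝ) < (v:ℝ) - (τ:ℝ) := sub_pos.mpr (by exact_mod_cast hτv)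
  set A : ℝ := (t:ℝ) - (v:ℝ) with hA_def
  set B : ℝ := (v:ℝ) - (τ:ℝ) with hB_def
  have hAB : (t:ℝ) - (τ:ℝ) = A + B := by rw [hA_def, hB_def]; ring
  rw [hAB]
  set k : ℝ := Real.sqrt (1 + B/A) with hk_def
  have hk0 : 0 ≤ k := Real.sqrt_nonneg _
  set a : ℝ := σ / Real.sqrt A with ha_def
  set b' : ℝ := -(σ * (1 + k) / Real.sqrt B) with hb'_def
  set c : ℝ := μ * k with hc_def
  have hapos : 0 < a := by rw [ha_def]; positivity
  have hbpos : 0 < σ * (1 + k) / Real.sqrt B := by positivity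
  have ha : a ≠ 0 := ne_of_gt hapos
  have hb' : b' ≠ 0 := by rw [hb'_def]; exact neg_ne_zero.mpr (ne_of_gt hbpos)
  clear_value A B k a b' c
  have hXmeas : Measurable (fun ω => a * Z₁ ω + b' * Z₂ ω) :=
    (h1meas.const_mul a).add (h2meas.const_mul b')
  have hset : {ω | (σ * Z₂ ω / Real.sqrt B + μ) * (1 + k)
        < σ * Z₁ ω / Real.sqrt A + μ}
      = (fun ω => a * Z₁ ω + b' * Z₂ ω) ⁻¹' (Set.Ioi c) := by
    ext ω
    simp only [Set.mem_setOf_eq, Set.mem_preimage, Set.mem_Ioi]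
    have hdiff : a * Z₁ ω + b' * Z₂ ω - c
        = (σ * Z₁ ω / Real.sqrt A + μ) - (σ * Z₂ ω / Real.sqrt B + μ) * (1 + k) := by
      rw [ha_def, hb'_def, hc_def]; ring
    constructor <;> intro h <;> linarith
  set V : NNReal := ⟨a^2, sq_nonneg a⟩ + ⟨b'^2, sq_nonneg b'⟩ with hV_def
  have hVcoe : ((V : NNReal) : ℝ) = a^2 + b'^2 := rfl
  have hVne : V ≠ 0 := by
    intro h
    have : ((V : NNReal) : ℝ) = 0 := by rw [h]; simp
    rw [hVcoe] at this
    nlinarith [sq_nonneg a, sq_nonneg b', pow_pos hapos 2]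
  have hmap : Measure.map (fun ω => a * Z₁ ω + b' * Z₂ ω) P = gaussianReal 0 V :=
    gauss_map_lin P Z₁ Z₂ h1meas h2meas hind h1 h2 a b' ha hb'
  have harg : c / Real.sqrt ((V : NNReal) : ℝ)
      = (μ / σ) * Real.sqrt ((A + B) * B / (B + (Real.sqrt A + Real.sqrt (A + B)) ^ 2)) := by
    rw [hVcoe, ha_def, hb'_def, hc_def, hk_def]
    exact arith_eq μ σ A B hμ hσ hA hB
  constructor
  · rw [hset, ← Measure.map_apply hXmeas measurableSet_Ioi, hmap, gauss_tail V hVne c, harg]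
  · have hle : (μ / σ) * Real.sqrt (B / 5)
        ≤ (μ / σ) * Real.sqrt ((A + B) * B / (B + (Real.sqrt A + Real.sqrt (A + B)) ^ 2)) :=
      mul_le_mul_of_nonneg_left (arith_ineq A B hA hB) (div_nonneg hμ.le hσ.le)
    exact sub_le_sub_left (stdCDF_mono hle) 1

end
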